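/- Define the degree sequence d_n = φ⁻ⁿ(H_f+H_g)·(H_f+H_g). Then d_n = 8n² + 2 for n ≥ 1, so (1/n) log d_n → 0 as n → ∞; i.e. the algebraic entropy of the system is zero. -/

import Mathlib

noncomputable section

abbrev Pic : Type := Fin 10 → ℚ

/-- basis vector: index 0 = H_f, 1 = H_g, 2..9 = E₁..E₈ -/
def e (k : Fin 10) : Pic := Pi.single k 1

/-- intersection form: H_f·H_g = 1, H_f² = H_g² = 0, Eᵢ·Eⱼ = −δᵢⱼ, H·Eᵢ = 0 -/
def ip (x y : Pic) : ℚ :=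
  x 0 * y 1 + x 1 * y 0 -
    (x 2 * y 2 + x 3 * y 3 + x 4 * y 4 + x 5 * y 5 +
     x 6 * y 6 + x 7 * y 7 + x 8 * y 8 + x 9 * y 9)

def Hf : Pic := e 0
def Hg : Pic := e 1
def E1 : Pic := e 2
def E2 : Pic := e 3
def E3 : Pic := e 4
def E4 : Pic := e 5
def E5 : Pic := e 6
def E6 : Pic := e 7
def E7 : Pic := e 8
def E8 : Pic := e 9

def d0 : Pic := E1 - E5
def d1 : Pic := E2 - E6
def d2 : Pic := Hf + Hg - E1 - E2 - E3 - E4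
def d3 : Pic := E3 - E7
def d4 : Pic := E4 - E8

def al0 : Pic := Hg - E1 - E5
def al1 : Pic := Hg - E2 - E6
def al2 : Pic := Hf - Hg
def al3 : Pic := Hg - E3 - E7
def al4 : Pic := Hg - E4 - E8

/-- null root = anticanonical class -/
def dn : Pic := 2 • Hf + 2 • Hg - E1 - E2 - E3 - E4 - E5 - E6 - E7 - E8

/-- canonical class -/
def Kcl : Pic := -(2 • Hf) - 2 • Hg + E1 + E2 + E3 + E4 + E5 + E6 + E7 + E8

/-- generalized Cartan matrix of type D₄⁽¹⁾ (node 2 central) -/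
def cartanD4 : Matrix (Fin 5) (Fin 5) ℚ :=
  !![2,0,-1,0,0; 0,2,-1,0,0; -1,-1,2,-1,-1; 0,0,-1,2,0; 0,0,-1,0,2]

/-- the linear map φ of Theorem 3.3, specified by its values on the ten generators -/
def IsPhi (φ : Pic →ₗ[ℚ] Pic) : Prop :=
  φ Hf = 5 • Hf + 2 • Hg - 2 • E1 - 2 • E2 - E3 - E4 - 2 • E5 - 2 • E6 - E7 - E8 ∧
  φ Hg = 2 • Hf + Hg - E1 - E2 - E5 - E6 ∧
  φ E1 = Hf - E5 ∧
  φ E2 = Hf - E6 ∧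
  φ E3 = 2 • Hf + Hg - E1 - E2 - E5 - E6 - E7 ∧
  φ E4 = 2 • Hf + Hg - E1 - E2 - E5 - E6 - E8 ∧
  φ E5 = Hf - E1 ∧
  φ E6 = Hf - E2 ∧
  φ E7 = 2 • Hf + Hg - E1 - E2 - E3 - E5 - E6 ∧
  φ E8 = 2 • Hf + Hg - E1 - E2 - E4 - E5 - E6


def w (n : ℕ) : Pic :=
  (4*(n:ℚ)^2 - 2*n + 1) • Hf + (4*(n:ℚ)^2 + 2*n + 1) • Hg
    - (2*(n:ℚ)^2 - n) • (E1 + E2 + E5 + E6) - (2*(n:ℚ)^2 + n) • (E3 + E4 + E7 + E8)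

lemma phi_w (φ : Pic →ₗ[ℚ] Pic) (hφ : IsPhi φ) (n : ℕ) : φ (w (n+1)) = w n := by
  obtain ⟨h1, h2, h3, h4, h5, h6, h7, h8, h9, h10⟩ := hφ
  simp only [w, map_add, map_sub, map_smul, h1, h2, h3, h4, h5, h6, h7, h8, h9, h10]
  funext i
  fin_cases i <;>
    simp [Hf, Hg, E1, E2, E3, E4, E5, E6, E7, E8, e, Pi.single_apply, Pi.sub_apply,
      Pi.add_apply, Pi.smul_apply, Pi.neg_apply, smul_eq_mul] <;>
    push_cast <;> ring

lemma pow_symm_w (φ : Pic ≃ₗ[ℚ] Pic) (hφ : IsPhi φ.toLinearMap) (n : ℕ) :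
    (φ.symm.toLinearMap ^ n) (Hf + Hg) = w n := by
  induction n with
  | zero =>
    simp only [pow_zero, Module.End.one_apply, w]
    push_cast
    funext i
    fin_cases i <;>
      simp [Hf, Hg, E1, E2, E3, E4, E5, E6, E7, E8, e, Pi.single_apply] <;> ring
  | succ n ih =>
    rw [pow_succ', Module.End.mul_apply, ih]
    rw [LinearEquiv.coe_coe, LinearEquiv.symm_apply_eq]
    exact (phi_w φ.toLinearMap hφ n).symm

lemma ip_w (n : ℕ) : ip (w n) (Hf + Hg) = 8 * (n:ℚ)^2 + 2 := by
  simp [ip, w, Hf, Hg, E1, E2, E3, E4, E5, E6, E7, E8, e, Pi.single_apply]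
  ring

theorem stmt15 (φ : Pic ≃ₗ[ℚ] Pic) (hφ : IsPhi φ.toLinearMap) :
    (∀ n : ℕ, 1 ≤ n →
      ip ((φ.symm.toLinearMap ^ n) (Hf + Hg)) (Hf + Hg) = 8 * (n : ℚ)^2 + 2) ∧
    Filter.Tendsto
      (fun n : ℕ =>
        (1 / (n : ℝ)) *
          Real.log ((ip ((φ.symm.toLinearMap ^ n) (Hf + Hg)) (Hf + Hg) : ℚ) : ℝ))
      Filter.atTop (nhds 0) := by
  have key : ∀ n : ℕ, ip ((φ.symm.toLinearMap ^ n) (Hf + Hg)) (Hf + Hg) = 8 * (n:ℚ)^2 + 2 := by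
    intro n; rw [pow_symm_w φ hφ, ip_w]
  refine ⟨fun n _ => key n, ?_⟩
  have hcongr : ∀ᶠ n : ℕ in Filter.atTop,
      (1 / (n : ℝ)) * Real.log ((ip ((φ.symm.toLinearMap ^ n) (Hf + Hg)) (Hf + Hg) : ℚ) : ℝ)
        = (1 / (n : ℝ)) * Real.log (8 * (n:ℝ)^2 + 2) := by
    filter_upwards [Filter.eventually_ge_atTop 1] with n _
    rw [key n]; push_cast; ring_nf
  rw [Filter.tendsto_congr' hcongr]
  apply squeeze_zero'
  · filter_upwards [Filter.eventually_ge_atTop 1] with n hn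
    have hn1 : (1:ℝ) ≤ n := by exact_mod_cast hn
    have : (1:ℝ) ≤ 8 * (n:ℝ)^2 + 2 := by nlinarith
    have := Real.log_nonneg this
    positivity
  · filter_upwards [Filter.eventually_ge_atTop 1] with n hn
    have hn1 : (1:ℝ) ≤ n := by exact_mod_cast hn
    have hle : 8 * (n:ℝ)^2 + 2 ≤ 10 * (n:ℝ)^2 := by nlinarith
    have hpos : (0:ℝ) < 8 * (n:ℝ)^2 + 2 := by positivity
    have hlog : Real.log (8 * (n:ℝ)^2 + 2) ≤ Real.log (10 * (n:ℝ)^2) :=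
      Real.log_le_log hpos hle
    have hsplit : Real.log (10 * (n:ℝ)^2) = Real.log 10 + 2 * Real.log n := by
      rw [Real.log_mul (by norm_num) (by positivity), Real.log_pow]; push_cast; ring
    calc (1 / (n:ℝ)) * Real.log (8 * (n:ℝ)^2 + 2)
        ≤ (1 / (n:ℝ)) * (Real.log 10 + 2 * Real.log n) := by
          apply mul_le_mul_of_nonneg_left (hsplit ▸ hlog) (by positivity)
      _ = Real.log 10 / n + 2 * (Real.log n / n) := by field_simp
  · have h1 : Filter.Tendsto (fun n : ℕ => Real.log 10 / (n:ℝ)) Filter.atTop (nhds 0) :=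
      tendsto_const_div_atTop_nhds_zero_nat _
    have h2 : Filter.Tendsto (fun n : ℕ => Real.log (n:ℝ) / (n:ℝ)) Filter.atTop (nhds 0) := by
      have := (Real.tendsto_pow_log_div_mul_add_atTop 1 0 1 one_ne_zero).comp
        tendsto_natCast_atTop_atTop
      simpa [Function.comp_def] using this
    have := h1.add ((h2.const_mul 2))
    simpa using this
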